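/- Let Z = (z_1, …, z_n) ~ N(0, Σ) be a centered Gaussian vector with Σ_{ii} = 1 for all i and |Σ_{ij}| ≤ 1/(C n²) for all i ≠ j, with C a sufficiently large universal constant and n sufficiently large. Then for every subset A ⊆ [n], γ1^n ≤ P(z_i > 0 for all i ∈ A and z_i < 0 for all i ∈ [n] \ A) ≤ γ2^n, where γ1 = 1/2 − 2/(C n) and γ2 = 1/2 + 2/(C n). -/

import Mathlib

open MeasureTheory ProbabilityTheory BigOperators Filter
open scoped ENNReal NNReal

noncomputable section

namespace XOR

attribute [local instance] Classical.propDecidable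

/-! ### Vectors, the network, and gradient descent -/

/-- Euclidean dot product on `Fin p → ℝ`. -/
def dot {p : ℕ} (x y : Fin p → ℝ) : ℝ := ∑ k, x k * y k

/-- Euclidean norm. -/
def nrm {p : ℕ} (x : Fin p → ℝ) : ℝ := Real.sqrt (dot x x)

/-- The ReLU activation. -/
def relu (z : ℝ) : ℝ := max z 0

/-- (A choice of) the derivative of the ReLU. -/
def reluD (z : ℝ) : ℝ := if 0 < z then 1 else 0

/-- The two-layer ReLU network `f(x; W) = ∑ j, a j * φ(⟨w_j, x⟩)`. -/
def nnet {p m : ℕ} (a : Fin m → ℝ) (W : Fin m → Fin p → ℝ) (x : Fin p → ℝ) : ℝ :=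
  ∑ j, a j * relu (dot (W j) x)

/-- `g(z) = -ℓ'(z) = 1/(1+e^z)` for the logistic loss `ℓ(z) = log(1+e^{-z})`. -/
def lossG (z : ℝ) : ℝ := 1 / (1 + Real.exp z)

/-- One step of gradient descent on the first-layer weights:
`w_j^{(t+1)} = w_j^{(t)} + (α a_j / n) ∑ i g_i^{(t)} φ'(⟨w_j^{(t)}, x_i⟩) y_i x_i`. -/
def gdStep {n p m : ℕ} (α : ℝ) (X : Fin n → Fin p → ℝ) (Y : Fin n → ℝ)
    (a : Fin m → ℝ) (W : Fin m → Fin p → ℝ) : Fin m → Fin p → ℝ :=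
  fun j k => W j k + (α * a j / n) *
    ∑ i, lossG (Y i * nnet a W (X i)) * reluD (dot (W j) (X i)) * (Y i * X i k)

/-- The gradient descent iterates `W^{(t)}`. -/
def gdIter {n p m : ℕ} (α : ℝ) (X : Fin n → Fin p → ℝ) (Y : Fin n → ℝ)
    (a : Fin m → ℝ) (W0 : Fin m → Fin p → ℝ) : ℕ → Fin m → Fin p → ℝ
  | 0 => W0
  | t + 1 => gdStep α X Y a (gdIter α X Y a W0 t)

/-- Frobenius norm of the first-layer weight matrix. -/
def frob {p m : ℕ} (W : Fin m → Fin p → ℝ) : ℝ :=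
  Real.sqrt (∑ j, ∑ k, (W j k) ^ 2)

/-! ### The XOR cluster structure -/

/-- The four cluster centers `+μ₁, -μ₁, +μ₂, -μ₂`, indexed by `Fin 4`. -/
def ctr {p : ℕ} (μ1 μ2 : Fin p → ℝ) : Fin 4 → Fin p → ℝ := ![μ1, -μ1, μ2, -μ2]

/-- The clean label of each cluster. -/
def cl : Fin 4 → ℝ := ![1, 1, -1, -1]

/-- The index of the opposite center: `ν ↦ -ν`. -/
def negIdx : Fin 4 → Fin 4 := ![1, 0, 3, 2]

/-- The set of the four cluster centers. -/
def centers {p : ℕ} (μ1 μ2 : Fin p → ℝ) : Set (Fin p → ℝ) := {μ1, -μ1, μ2, -μ2}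

/-- Structural hypotheses on the means: orthogonality and equal norms. -/
def MeanHyp {p : ℕ} (μ1 μ2 : Fin p → ℝ) : Prop :=
  dot μ1 μ2 = 0 ∧ nrm μ1 = nrm μ2

/-- Basic constraints on the parameters: `η ∈ [0, 1/2)`, `α > 0`, `ω_init ≥ 0`. -/
def ParamHyp (η α winit : ℝ) : Prop :=
  0 ≤ η ∧ η < 1 / 2 ∧ 0 < α ∧ 0 ≤ winit

/-- Assumptions (A1)–(A6), where `μn = ‖μ‖`:
(A1) `‖μ‖² ≥ C n^{0.51} √p`, (A2) `p ≥ C n² ‖μ‖²`, (A3) `η ≤ 1/C`,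
(A4) `α ≤ 1/(C n p)`, (A5) `ω_init n m^{3/2} p ≤ α ‖μ‖²`, (A6) `m ≥ C n^{0.02}`. -/
def Assum (C : ℝ) (n p m : ℕ) (μn η α winit : ℝ) : Prop :=
  C * (n : ℝ) ^ (0.51 : ℝ) * Real.sqrt p ≤ μn ^ 2 ∧
  C * (n : ℝ) ^ 2 * μn ^ 2 ≤ (p : ℝ) ∧
  η ≤ 1 / C ∧
  α ≤ 1 / (C * n * p) ∧
  winit * n * (m : ℝ) ^ ((3 : ℝ) / 2) * (p : ℝ) ≤ α * μn ^ 2 ∧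
  C * (n : ℝ) ^ (0.02 : ℝ) ≤ (m : ℝ)

/-! ### The probability model

The randomness is generated from canonical sources: for each training sample a
uniform cluster index in `Fin 4`, standard Gaussian noise in `ℝ^p`, and a standard
Gaussian variable whose CDF-value is used as the (uniform) label-flip coin; for
the network, uniform signs in `Bool` for the second layer, and standard Gaussian
first-layer noise which is scaled by `ω_init`. -/

abbrev Vec (p : ℕ) := Fin p → ℝ

/-- Sample space: cluster indices, data noise, flip coins, second-layer signs,
and unscaled first-layer initialization. -/
abbrev Sample (n p m : ℕ) :=
  (Fin n → Fin 4) × (Fin n → Vec p) × (Fin n → ℝ) × (Fin m → Bool) × (Fin m → Vec p)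

/-- The standard Gaussian measure on `ℝ^p`. -/
def stdG (p : ℕ) : Measure (Vec p) := Measure.pi fun _ => gaussianReal 0 1

/-- The joint law of all randomness. -/
def sampleMeasure (n p m : ℕ) : Measure (Sample n p m) :=
  ((PMF.uniformOfFintype (Fin n → Fin 4)).toMeasure).prod
    ((Measure.pi fun _ : Fin n => stdG p).prod
      ((Measure.pi fun _ : Fin n => gaussianReal 0 1).prod
        (((PMF.uniformOfFintype (Fin m → Bool)).toMeasure).prod
          (Measure.pi fun _ : Fin m => stdG p))))

/-- The training inputs `x_i = x̄_i + ξ_i`. -/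
def trainX {n p m : ℕ} (μ1 μ2 : Vec p) (ω : Sample n p m) : Fin n → Vec p :=
  fun i => ctr μ1 μ2 (ω.1 i) + ω.2.1 i

/-- The (possibly flipped) training labels: the label is flipped iff the uniform
variable `Φ(g_i)` is `< η`, which happens with probability `η`. -/
def trainY {n p m : ℕ} (η : ℝ) (ω : Sample n p m) : Fin n → ℝ :=
  fun i => (if cdf (gaussianReal 0 1) (ω.2.2.1 i) < η then -1 else 1) * cl (ω.1 i)

/-- The second-layer weights `a_j ∈ {± 1/√m}`. -/
def secondLayer {n p m : ℕ} (ω : Sample n p m) : Fin m → ℝ :=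
  fun j => if ω.2.2.2.1 j then 1 / Real.sqrt m else -(1 / Real.sqrt m)

/-- The initialization `w_j^{(0)} ∼ N(0, ω_init² I_p)`. -/
def initW {n p m : ℕ} (winit : ℝ) (ω : Sample n p m) : Fin m → Vec p :=
  fun j k => winit * ω.2.2.2.2 j k

/-- The trained first-layer weights `W^{(t)}`. -/
def netW {n p m : ℕ} (μ1 μ2 : Vec p) (η α winit : ℝ) (ω : Sample n p m) (t : ℕ) :
    Fin m → Vec p :=
  gdIter α (trainX μ1 μ2 ω) (trainY η ω) (secondLayer ω) (initW winit ω) t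

/-- The clean test distribution `P_clean` on `ℝ^p × ℝ`. -/
def Pclean (p : ℕ) (μ1 μ2 : Vec p) : Measure (Vec p × ℝ) :=
  Measure.map (fun w : Fin 4 × Vec p => (ctr μ1 μ2 w.1 + w.2, cl w.1))
    (((PMF.uniformOfFintype (Fin 4)).toMeasure).prod (stdG p))

/-- The Gaussian measure `N(ν, I_p)` at center index `q`. -/
def gaussAt {p : ℕ} (μ1 μ2 : Vec p) (q : Fin 4) : Measure (Vec p) :=
  Measure.map (fun z => ctr μ1 μ2 q + z) (stdG p)

/-- The clean test error of the classifier `sgn ∘ f(·; a, W)`. -/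
def testErr {p m : ℕ} (μ1 μ2 : Vec p) (a : Fin m → ℝ) (W : Fin m → Vec p) : ℝ :=
  ((Pclean p μ1 μ2) {xy : Vec p × ℝ | xy.2 ≠ Real.sign (nnet a W xy.1)}).toReal

/-! ### Counts, alignment, and the "good run" conditions -/

/-- `c_ν`: number of clean samples in the cluster with center index `q`. -/
def cntC {n : ℕ} (u : Fin n → Fin 4) (Y : Fin n → ℝ) (q : Fin 4) : ℕ :=
  (Finset.univ.filter fun i => u i = q ∧ Y i = cl q).card

/-- `n_ν`: number of noisy samples in the cluster with center index `q`. -/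
def cntN {n : ℕ} (u : Fin n → Fin 4) (Y : Fin n → ℝ) (q : Fin 4) : ℕ :=
  (Finset.univ.filter fun i => u i = q ∧ Y i ≠ cl q).card

/-- The clean samples of cluster `q` activating neuron `j` for weights `W`. -/
def actC {n p m : ℕ} (u : Fin n → Fin 4) (X : Fin n → Vec p) (Y : Fin n → ℝ)
    (W : Fin m → Vec p) (q : Fin 4) (j : Fin m) : Finset (Fin n) :=
  Finset.univ.filter fun i => u i = q ∧ Y i = cl q ∧ 0 < dot (W j) (X i)

/-- The noisy samples of cluster `q` activating neuron `j` for weights `W`. -/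
def actN {n p m : ℕ} (u : Fin n → Fin 4) (X : Fin n → Vec p) (Y : Fin n → ℝ)
    (W : Fin m → Vec p) (q : Fin 4) (j : Fin m) : Finset (Fin n) :=
  Finset.univ.filter fun i => u i = q ∧ Y i ≠ cl q ∧ 0 < dot (W j) (X i)

/-- `d_{ν,j} = |C_{ν,j}| - |N_{ν,j}|`. -/
def dval {n p m : ℕ} (u : Fin n → Fin 4) (X : Fin n → Vec p) (Y : Fin n → ℝ)
    (W : Fin m → Vec p) (q : Fin 4) (j : Fin m) : ℤ :=
  ((actC u X Y W q j).card : ℤ) - ((actN u X Y W q j).card : ℤ)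

/-- `D_{ν,j} = d_{ν,j} - d_{-ν,j}`. -/
def Dval {n p m : ℕ} (u : Fin n → Fin 4) (X : Fin n → Vec p) (Y : Fin n → ℝ)
    (W : Fin m → Vec p) (q : Fin 4) (j : Fin m) : ℤ :=
  dval u X Y W q j - dval u X Y W (negIdx q) j

/-- Neuron `j` is `(ν, κ)`-aligned (w.r.t. the initialization `W0`). -/
def Aligned {n p m : ℕ} (u : Fin n → Fin 4) (X : Fin n → Vec p) (Y : Fin n → ℝ)
    (W0 : Fin m → Vec p) (κ : ℝ) (q : Fin 4) (j : Fin m) : Prop :=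
  (n : ℝ) ^ ((1 : ℝ) / 2 - κ) < (Dval u X Y W0 q j : ℝ) ∧
  max ((dval u X Y W0 (negIdx q) j : ℝ)) ((dval u X Y W0 q j : ℝ)) <
    min (cntC u Y q : ℝ) (cntC u Y (negIdx q) : ℝ) -
      2 * ((cntN u Y q : ℝ) + (cntN u Y (negIdx q) : ℝ)) - Real.sqrt n

/-- Condition (B1). -/
def CondB1 {n p : ℕ} (μ1 μ2 : Vec p) (u : Fin n → Fin 4) (X : Fin n → Vec p) : Prop :=
  ∀ k : Fin n,
    (∀ ν ∈ centers μ1 μ2, dot (X k - ctr μ1 μ2 (u k)) ν ≤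
        10 * Real.sqrt (Real.log n) * nrm μ1) ∧
    |nrm (X k) ^ 2 - p - nrm μ1 ^ 2| ≤ 10 * Real.sqrt (p * Real.log n)

/-- Condition (B2). -/
def CondB2 {n p : ℕ} (μ1 μ2 : Vec p) (u : Fin n → Fin 4) (X : Fin n → Vec p) : Prop :=
  ∀ i k : Fin n, i ≠ k →
    |dot (X i) (X k) - dot (ctr μ1 μ2 (u i)) (ctr μ1 μ2 (u k))| ≤
      10 * Real.sqrt (p * Real.log n)

/-- Condition (B3). -/
def CondB3 {n : ℕ} (ε η : ℝ) (u : Fin n → Fin 4) (Y : Fin n → ℝ) : Prop :=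
  ∀ q : Fin 4,
    |(cntC u Y q : ℝ) + (cntN u Y q : ℝ) - n / 4| ≤ Real.sqrt (ε * n * Real.log n) ∧
    |(cntN u Y q : ℝ) - η * ((cntC u Y q : ℝ) + (cntN u Y q : ℝ))| ≤
      Real.sqrt (ε * η * n * Real.log n)

/-- Condition (B4). -/
def CondB4 {n : ℕ} (ε η : ℝ) (u : Fin n → Fin 4) (Y : Fin n → ℝ) : Prop :=
  ∀ q : Fin 4,
    (n : ℝ) ^ ((1 : ℝ) / 2 - ε) ≤
      |(cntC u Y q : ℝ) + (cntN u Y q : ℝ) -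
        (cntC u Y (negIdx q) : ℝ) - (cntN u Y (negIdx q) : ℝ)| ∧
    η * (n : ℝ) ^ ((1 : ℝ) / 2 - ε) ≤ |(cntN u Y q : ℝ) - (cntN u Y (negIdx q) : ℝ)|

/-- Conditions (B1)–(B4) together. -/
def CondB {n p : ℕ} (ε : ℝ) (μ1 μ2 : Vec p) (η : ℝ) (u : Fin n → Fin 4)
    (X : Fin n → Vec p) (Y : Fin n → ℝ) : Prop :=
  CondB1 μ1 μ2 u X ∧ CondB2 μ1 μ2 u X ∧ CondB3 ε η u Y ∧ CondB4 ε η u Y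

/-- Condition (C1): `‖W^{(0)}‖_F² ≤ (3/2) ω_init² m p`. -/
def CondC1 {p m : ℕ} (winit : ℝ) (W0 : Fin m → Vec p) : Prop :=
  ∑ j, ∑ k, (W0 j k) ^ 2 ≤ 3 / 2 * winit ^ 2 * m * p

/-- The positive neurons `J_Pos`. -/
def posNeurons {m : ℕ} (a : Fin m → ℝ) : Finset (Fin m) :=
  Finset.univ.filter fun j => 0 < a j

/-- The negative neurons `J_Neg`. -/
def negNeurons {m : ℕ} (a : Fin m → ℝ) : Finset (Fin m) :=
  Finset.univ.filter fun j => a j < 0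

/-- Condition (C2): `|J_Pos| ≥ m/3` and `|J_Neg| ≥ m/3`. -/
def CondC2 {m : ℕ} (a : Fin m → ℝ) : Prop :=
  (m : ℝ) / 3 ≤ (posNeurons a).card ∧ (m : ℝ) / 3 ≤ (negNeurons a).card

/-- Condition (D1). -/
def CondD1 {n p m : ℕ} (u : Fin n → Fin 4) (X : Fin n → Vec p)
    (a : Fin m → ℝ) (W0 : Fin m → Vec p) : Prop :=
  ∀ i : Fin n,
    (m : ℝ) / 7 ≤ ((posNeurons a).filter fun j => 0 < dot (W0 j) (X i)).card ∧
    (m : ℝ) / 7 ≤ ((negNeurons a).filter fun j => 0 < dot (W0 j) (X i)).card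

/-- Condition (D2). -/
def CondD2 {n p m : ℕ} (ε : ℝ) (u : Fin n → Fin 4) (X : Fin n → Vec p) (Y : Fin n → ℝ)
    (a : Fin m → ℝ) (W0 : Fin m → Vec p) : Prop :=
  ∀ q : Fin 4, ∀ κ : ℝ, 0 ≤ κ → κ < 1 / 2 →
    (m : ℝ) * (n : ℝ) ^ (-(10 * ε)) ≤
      ((posNeurons a).filter fun j => Aligned u X Y W0 κ q j).card ∧
    (m : ℝ) * (n : ℝ) ^ (-(10 * ε)) ≤
      ((negNeurons a).filter fun j => Aligned u X Y W0 κ q j).card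

/-- Condition (D3). -/
def CondD3 {n p m : ℕ} (ε : ℝ) (u : Fin n → Fin 4) (X : Fin n → Vec p) (Y : Fin n → ℝ)
    (a : Fin m → ℝ) (W0 : Fin m → Vec p) : Prop :=
  ∀ q : Fin 4,
    (1 - 10 * (n : ℝ) ^ (-(20 * ε))) * (posNeurons a).card ≤
      ((posNeurons a).filter fun j =>
        Aligned u X Y W0 (20 * ε) q j ∨ Aligned u X Y W0 (20 * ε) (negIdx q) j).card ∧
    (1 - 10 * (n : ℝ) ^ (-(20 * ε))) * (negNeurons a).card ≤
      ((negNeurons a).filter fun j =>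
        Aligned u X Y W0 (20 * ε) q j ∨ Aligned u X Y W0 (20 * ε) (negIdx q) j).card

/-- Condition (D4). -/
def CondD4 {n p m : ℕ} (u : Fin n → Fin 4) (X : Fin n → Vec p) (Y : Fin n → ℝ)
    (a : Fin m → ℝ) (W0 : Fin m → Vec p) : Prop :=
  ∀ q : Fin 4, ∀ κ : ℝ, 0 ≤ κ → κ < 1 / 2 →
    ((n : ℝ) / 10) * ((posNeurons a).filter fun j => Aligned u X Y W0 κ q j).card ≤
      (∑ j ∈ (posNeurons a).filter (fun j => Aligned u X Y W0 κ q j),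
        ((cntC u Y q : ℝ) - (cntN u Y q : ℝ) - (dval u X Y W0 (negIdx q) j : ℝ))) ∧
    ((n : ℝ) / 10) * ((negNeurons a).filter fun j => Aligned u X Y W0 κ q j).card ≤
      (∑ j ∈ (negNeurons a).filter (fun j => Aligned u X Y W0 κ q j),
        ((cntC u Y q : ℝ) - (cntN u Y q : ℝ) - (dval u X Y W0 (negIdx q) j : ℝ)))

/-- Conditions (D1)–(D4) together. -/
def CondD {n p m : ℕ} (ε : ℝ) (u : Fin n → Fin 4) (X : Fin n → Vec p) (Y : Fin n → ℝ)
    (a : Fin m → ℝ) (W0 : Fin m → Vec p) : Prop :=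
  CondD1 u X a W0 ∧ CondD2 ε u X Y a W0 ∧ CondD3 ε u X Y a W0 ∧ CondD4 u X Y a W0

/-- A "good run": conditions (B1)–(B4), (C1)–(C2) and (D1)–(D4) all hold. -/
def GoodRun {n p m : ℕ} (ε : ℝ) (μ1 μ2 : Vec p) (η winit : ℝ) (u : Fin n → Fin 4)
    (X : Fin n → Vec p) (Y : Fin n → ℝ) (a : Fin m → ℝ) (W0 : Fin m → Vec p) : Prop :=
  CondB ε μ1 μ2 η u X Y ∧ CondC1 winit W0 ∧ CondC2 a ∧ CondD ε u X Y a W0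

/-- Labels take values in `{±1}`. -/
def ModelData {n : ℕ} (Y : Fin n → ℝ) : Prop := ∀ i, Y i = 1 ∨ Y i = -1

/-- Second-layer weights take values in `{±1/√m}`. -/
def ModelLayer {m : ℕ} (a : Fin m → ℝ) : Prop :=
  ∀ j, a j = 1 / Real.sqrt m ∨ a j = -(1 / Real.sqrt m)

end XOR

namespace XOR

attribute [local instance] Classical.propDecidable

section AuxGaussOrthant

open Real Set Matrix

set_option linter.unusedVariables false
set_option linter.deprecated false

def qsum {n : ℕ} (v : Fin n → ℝ) : ℝ := ∑ i, v i ^ 2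

lemma qsum_nonneg {n : ℕ} (v : Fin n → ℝ) : 0 ≤ qsum v :=
  Finset.sum_nonneg fun _ _ => sq_nonneg _

lemma op_bound {n : ℕ} (M : Matrix (Fin n) (Fin n) ℝ) {ε : ℝ} (hε : 0 ≤ ε)
    (h : ∀ i j, |M i j| ≤ ε) (v : Fin n → ℝ) :
    qsum (M *ᵥ v) ≤ ε ^ 2 * (n : ℝ) ^ 2 * qsum v := by
  have habs : ∀ i : Fin n, |(M *ᵥ v) i| ≤ ε * ∑ j, |v j| := by
    intro i
    calc |(M *ᵥ v) i| = |∑ j, M i j * v j| := rfl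
      _ ≤ ∑ j, |M i j * v j| := Finset.abs_sum_le_sum_abs _ _
      _ ≤ ∑ j, ε * |v j| := by
          refine Finset.sum_le_sum fun j _ => ?_
          rw [abs_mul]
          exact mul_le_mul_of_nonneg_right (h i j) (abs_nonneg _)
      _ = ε * ∑ j, |v j| := by rw [Finset.mul_sum]
  have hsumabs : (∑ j, |v j|) ^ 2 ≤ (n : ℝ) * qsum v := by
    have := Finset.sum_mul_sq_le_sq_mul_sq Finset.univ (fun _ : Fin n => (1:ℝ)) (fun j => |v j|)
    simpa [qsum, Finset.card_univ, sq_abs] using this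
  have hterm : ∀ i : Fin n, (M *ᵥ v) i ^ 2 ≤ ε ^ 2 * ((n:ℝ) * qsum v) := by
    intro i
    have h1 : |(M *ᵥ v) i| ^ 2 ≤ (ε * ∑ j, |v j|) ^ 2 := by
      have h0 : (0:ℝ) ≤ |(M *ᵥ v) i| := abs_nonneg _
      exact pow_le_pow_left₀ h0 (habs i) 2
    rw [sq_abs] at h1
    calc (M *ᵥ v) i ^ 2 ≤ (ε * ∑ j, |v j|) ^ 2 := h1
      _ = ε ^ 2 * (∑ j, |v j|) ^ 2 := by ring
      _ ≤ ε ^ 2 * ((n:ℝ) * qsum v) := by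
          exact mul_le_mul_of_nonneg_left hsumabs (sq_nonneg ε)
  calc qsum (M *ᵥ v) = ∑ i, (M *ᵥ v) i ^ 2 := rfl
    _ ≤ ∑ _i : Fin n, ε ^ 2 * ((n:ℝ) * qsum v) := Finset.sum_le_sum fun i _ => hterm i
    _ = ε ^ 2 * (n:ℝ) ^ 2 * qsum v := by
        rw [Finset.sum_const, Finset.card_univ, Fintype.card_fin]; ring

lemma dot_le {n : ℕ} {d : ℝ} (hd : 0 ≤ d) (v e : Fin n → ℝ)
    (h : qsum e ≤ d ^ 2 * qsum v) : |∑ i, v i * e i| ≤ d * qsum v := by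
  have h1 : (∑ i, v i * e i) ^ 2 ≤ qsum v * qsum e :=
    Finset.sum_mul_sq_le_sq_mul_sq Finset.univ v e
  have h2 : (∑ i, v i * e i) ^ 2 ≤ (d * qsum v) ^ 2 := by
    calc (∑ i, v i * e i) ^ 2 ≤ qsum v * qsum e := h1
      _ ≤ qsum v * (d ^ 2 * qsum v) :=
          mul_le_mul_of_nonneg_left h (qsum_nonneg v)
      _ = (d * qsum v) ^ 2 := by ring
  exact abs_le_of_sq_le_sq h2 (mul_nonneg hd (qsum_nonneg v))




/-- Scaled Gaussian-type density. -/
def gc (c t : ℝ) : ℝ := (√(2 * π))⁻¹ * rexp (-(c / 2) * t ^ 2)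

lemma gc_nonneg (c t : ℝ) : 0 ≤ gc c t :=
  mul_nonneg (inv_nonneg.2 (Real.sqrt_nonneg _)) (Real.exp_nonneg _)

lemma gc_measurable (c : ℝ) : Measurable (gc c) := by
  unfold gc; fun_prop

lemma gc_integrable {c : ℝ} (hc : 0 < c) : Integrable (gc c) :=
  ((integrable_exp_neg_mul_sq (by linarith : (0:ℝ) < c / 2)).const_mul _)

lemma gaussianPDFReal_eq_gc (t : ℝ) : gaussianPDFReal 0 1 t = gc 1 t := by
  unfold gaussianPDFReal gc
  norm_num
  ring_nf
  exact Or.inl trivial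

lemma prod_gc {n : ℕ} (c : ℝ) (z : Fin n → ℝ) :
    ∏ i, gc c (z i) = ((√(2 * π))⁻¹) ^ n * rexp (-(c / 2) * ∑ i, z i ^ 2) := by
  unfold gc
  rw [Finset.prod_mul_distrib, Finset.prod_const, ← Real.exp_sum, Finset.card_univ,
    Fintype.card_fin, Finset.mul_sum]

lemma integral_gc_Ioi {c : ℝ} (hc : 0 < c) :
    ∫ t in Ioi (0:ℝ), gc c t = 2⁻¹ * (√c)⁻¹ := by
  unfold gc
  rw [MeasureTheory.integral_const_mul]
  have : ∫ t in Ioi (0:ℝ), rexp (-(c / 2) * t ^ 2) = √(π / (c / 2)) / 2 :=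
    integral_gaussian_Ioi (c / 2)
  rw [this]
  have h2π : (0:ℝ) < 2 * π := by positivity
  have hs2π : √(2 * π) ≠ 0 := by positivity
  have hsc : √c ≠ 0 := by positivity
  have : π / (c / 2) = 2 * π / c := by field_simp
  rw [this, Real.sqrt_div (by positivity : (0:ℝ) ≤ 2 * π)]
  field_simp

lemma integral_gc_Iio {c : ℝ} (hc : 0 < c) :
    ∫ t in Iio (0:ℝ), gc c t = 2⁻¹ * (√c)⁻¹ := by
  have heven : ∀ t : ℝ, gc c (-t) = gc c t := by intro t; unfold gc; ring_nf
  have h1 : ∫ t in Iic (0:ℝ), gc c t = ∫ t in Ioi (0:ℝ), gc c t := by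
    have h2 := integral_comp_neg_Ioi (0:ℝ) (gc c)
    simp_rw [heven, neg_zero] at h2
    exact h2.symm
  rw [← integral_gc_Ioi hc, ← h1]
  exact (integral_Iic_eq_integral_Iio).symm




/-- lintegral of a product function over a box equals product of lintegrals. -/
lemma lintegral_prod_fn {n : ℕ} (g : Fin n → ℝ → ℝ) (hm : ∀ i, Measurable (g i))
    (h0 : ∀ i x, 0 ≤ g i x) (hi : ∀ i, Integrable (g i)) :
    ∫⁻ x : Fin n → ℝ, ENNReal.ofReal (∏ i, g i (x i)) = ∏ i, ∫⁻ t, ENNReal.ofReal (g i t) := by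
  have hint : Integrable (fun x : Fin n → ℝ => ∏ i, g i (x i)) := Integrable.fintype_prod hi
  have hnn : 0 ≤ᵐ[volume] fun x : Fin n → ℝ => ∏ i, g i (x i) :=
    Filter.Eventually.of_forall fun x => Finset.prod_nonneg fun i _ => h0 i (x i)
  rw [← ofReal_integral_eq_lintegral_ofReal hint hnn, integral_fintype_prod_volume_eq_prod,
    ENNReal.ofReal_prod_of_nonneg fun i _ => integral_nonneg (h0 i)]
  exact Finset.prod_congr rfl fun i _ =>
    ofReal_integral_eq_lintegral_ofReal (hi i) (Filter.Eventually.of_forall (h0 i))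

lemma lintegral_prod_box {n : ℕ} (g : Fin n → ℝ → ℝ) (hm : ∀ i, Measurable (g i))
    (h0 : ∀ i x, 0 ≤ g i x) (hi : ∀ i, Integrable (g i))
    (s : Fin n → Set ℝ) (hs : ∀ i, MeasurableSet (s i)) :
    ∫⁻ x : Fin n → ℝ in Set.pi Set.univ s, ENNReal.ofReal (∏ i, g i (x i)) =
      ∏ i, ∫⁻ t in s i, ENNReal.ofReal (g i t) := by
  have hbox : MeasurableSet (Set.pi Set.univ s) := MeasurableSet.univ_pi hs
  rw [← lintegral_indicator hbox _]
  have heq : (Set.pi Set.univ s).indicator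
      (fun x : Fin n → ℝ => ENNReal.ofReal (∏ i, g i (x i))) =
      fun x => ENNReal.ofReal (∏ i, (s i).indicator (g i) (x i)) := by
    ext x
    by_cases hx : x ∈ Set.pi Set.univ s
    · rw [Set.indicator_of_mem hx]
      congr 1
      exact Finset.prod_congr rfl fun i _ =>
        (Set.indicator_of_mem (hx i (Set.mem_univ i)) _).symm
    · rw [Set.indicator_of_notMem hx]
      rw [Set.mem_univ_pi] at hx
      push_neg at hx
      obtain ⟨i, hxi⟩ := hx
      rw [Finset.prod_eq_zero (Finset.mem_univ i)]
      · simp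
      · exact Set.indicator_of_notMem hxi _
    
  rw [heq, lintegral_prod_fn (fun i => (s i).indicator (g i))
      (fun i => (hm i).indicator (hs i))
      (fun i x => Set.indicator_nonneg (fun y _ => h0 i y) x)
      (fun i => (hi i).indicator (hs i))]
  refine Finset.prod_congr rfl fun i _ => ?_
  rw [← lintegral_indicator (hs i) _]
  congr 1
  ext t
  by_cases ht : t ∈ s i
  · rw [Set.indicator_of_mem ht, Set.indicator_of_mem ht]
  · rw [Set.indicator_of_notMem ht, Set.indicator_of_notMem ht, ENNReal.ofReal_zero]

/-- The pi Gaussian measure as a density against Lebesgue. -/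
lemma pi_gauss_eq {n : ℕ} :
    (Measure.pi fun _ : Fin n => gaussianReal 0 1) =
      volume.withDensity (fun x : Fin n → ℝ =>
        ENNReal.ofReal (∏ i, gaussianPDFReal 0 1 (x i))) := by
  apply Measure.pi_eq
  intro s hs
  rw [withDensity_apply _ (MeasurableSet.univ_pi hs),
    lintegral_prod_box _ (fun _ => measurable_gaussianPDFReal 0 1)
      (fun _ x => gaussianPDFReal_nonneg 0 1 x) (fun _ => integrable_gaussianPDFReal 0 1) s hs]
  exact Finset.prod_congr rfl fun i _ => (gaussianReal_apply 0 one_ne_zero (s i)).symm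





lemma decomp {n : ℕ} (Sg : Matrix (Fin n) (Fin n) ℝ) (v : Fin n → ℝ) :
    Sg *ᵥ v = v + (Sg - 1) *ᵥ v := by
  rw [Matrix.sub_mulVec, Matrix.one_mulVec]
  abel

lemma qf_bound {n : ℕ} {d : ℝ} (Sg : Matrix (Fin n) (Fin n) ℝ) (hd : 0 ≤ d)
    (hop : ∀ v, qsum ((Sg - 1) *ᵥ v) ≤ d ^ 2 * qsum v) (v : Fin n → ℝ) :
    |∑ i, v i * (Sg *ᵥ v) i - qsum v| ≤ d * qsum v := by
  have h1 : ∑ i, v i * (Sg *ᵥ v) i - qsum v = ∑ i, v i * ((Sg - 1) *ᵥ v) i := by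
    rw [decomp Sg v]
    simp only [Pi.add_apply, qsum]
    rw [← Finset.sum_sub_distrib]
    refine Finset.sum_congr rfl fun i _ => by ring
  rw [h1]
  exact dot_le hd v _ (hop v)

lemma norm_bound {n : ℕ} {d : ℝ} (Sg : Matrix (Fin n) (Fin n) ℝ) (hd : 0 ≤ d)
    (hop : ∀ v, qsum ((Sg - 1) *ᵥ v) ≤ d ^ 2 * qsum v) (v : Fin n → ℝ) :
    (1 - 2 * d) * qsum v ≤ qsum (Sg *ᵥ v) ∧ qsum (Sg *ᵥ v) ≤ (1 + d) ^ 2 * qsum v := by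
  have hexp : qsum (Sg *ᵥ v) = qsum v + 2 * (∑ i, v i * ((Sg - 1) *ᵥ v) i)
      + qsum ((Sg - 1) *ᵥ v) := by
    rw [decomp Sg v]
    simp only [qsum, Pi.add_apply]
    rw [Finset.mul_sum, ← Finset.sum_add_distrib, ← Finset.sum_add_distrib]
    refine Finset.sum_congr rfl fun i _ => by ring
  have hdot := dot_le hd v _ (hop v)
  have h0 := qsum_nonneg ((Sg - 1) *ᵥ v)
  have h0v := qsum_nonneg v
  have habs := abs_le.mp hdot
  constructor
  · nlinarith [hop v]
  · nlinarith [hop v]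





lemma eig_bound {n : ℕ} {d : ℝ} {Sg : Matrix (Fin n) (Fin n) ℝ} (hherm : Sg.IsHermitian) (hd : 0 ≤ d)
    (hop : ∀ v, qsum ((Sg - 1) *ᵥ v) ≤ d ^ 2 * qsum v) (j : Fin n) :
    1 - d ≤ hherm.eigenvalues j ∧ hherm.eigenvalues j ≤ 1 + d := by
  set v : Fin n → ℝ := ⇑(hherm.eigenvectorBasis j) with hvdef
  have hv : Sg *ᵥ v = hherm.eigenvalues j • v := hherm.mulVec_eigenvectorBasis j
  have hnorm1 : ‖hherm.eigenvectorBasis j‖ = 1 := hherm.eigenvectorBasis.orthonormal.1 j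
  have hQv : qsum v = 1 := by
    have h2 : √(∑ i, ‖hherm.eigenvectorBasis j i‖ ^ 2) = 1 := by
      rw [← EuclideanSpace.norm_eq]; exact hnorm1
    have h3 : (∑ i, ‖hherm.eigenvectorBasis j i‖ ^ 2) = qsum v := by
      simp only [qsum, Real.norm_eq_abs, sq_abs]
      rfl
    rw [h3] at h2
    exact Real.sqrt_eq_one.mp h2
  have hsum : ∑ i, v i * (Sg *ᵥ v) i = hherm.eigenvalues j := by
    rw [hv]
    simp only [Pi.smul_apply, smul_eq_mul]
    calc ∑ i, v i * (hherm.eigenvalues j * v i)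
        = hherm.eigenvalues j * ∑ i, v i ^ 2 := by
          rw [Finset.mul_sum]; exact Finset.sum_congr rfl fun i _ => by ring
      _ = hherm.eigenvalues j := by rw [← qsum, hQv, mul_one]
  have := qf_bound Sg hd hop v
  rw [hsum, hQv, mul_one] at this
  have h := abs_le.mp this
  constructor <;> linarith [h.1, h.2]

lemma det_bound {n : ℕ} {d : ℝ} {Sg : Matrix (Fin n) (Fin n) ℝ} (hherm : Sg.IsHermitian) (hd : 0 ≤ d) (hd1 : d ≤ 1)
    (hop : ∀ v, qsum ((Sg - 1) *ᵥ v) ≤ d ^ 2 * qsum v) :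
    (1 - d) ^ n ≤ Sg.det ∧ Sg.det ≤ (1 + d) ^ n := by
  have hdet : Sg.det = ∏ j, hherm.eigenvalues j := by
    simpa using hherm.det_eq_prod_eigenvalues
  constructor
  · rw [hdet]
    calc (1 - d) ^ n = ∏ _j : Fin n, (1 - d) := by
          rw [Finset.prod_const, Finset.card_univ, Fintype.card_fin]
      _ ≤ ∏ j, hherm.eigenvalues j :=
          Finset.prod_le_prod (fun j _ => by linarith) (fun j _ => (eig_bound hherm hd hop j).1)
  · rw [hdet]
    calc ∏ j, hherm.eigenvalues j ≤ ∏ _j : Fin n, (1 + d) :=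
          Finset.prod_le_prod (fun j _ => by linarith [(eig_bound hherm hd hop j).1])
            (fun j _ => (eig_bound hherm hd hop j).2)
      _ = (1 + d) ^ n := by rw [Finset.prod_const, Finset.card_univ, Fintype.card_fin]





lemma inv_quad_bound {n : ℕ} {d : ℝ} (A : Matrix (Fin n) (Fin n) ℝ) (hd : 0 ≤ d) (hd2 : 2 * d < 1)
    (hUA : IsUnit A.det) (hUS : IsUnit (A * Aᵀ).det)
    (hop : ∀ v, qsum ((A * Aᵀ - 1) *ᵥ v) ≤ d ^ 2 * qsum v) (z : Fin n → ℝ) :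
    ((1 - d) / (1 + d) ^ 2) * qsum z ≤ qsum (A⁻¹ *ᵥ z) ∧
      qsum (A⁻¹ *ᵥ z) ≤ ((1 + d) / (1 - 2 * d)) * qsum z := by
  set Sg := A * Aᵀ with hSgdef
  have hsym : Sgᵀ = Sg := by
    rw [hSgdef, Matrix.transpose_mul, Matrix.transpose_transpose]
  set w : Fin n → ℝ := Sg⁻¹ *ᵥ z with hwdef
  have hzw : Sg *ᵥ w = z := by
    rw [hwdef, Matrix.mulVec_mulVec, Matrix.mul_nonsing_inv _ hUS, Matrix.one_mulVec]
  have hBz : A⁻¹ *ᵥ z = Aᵀ *ᵥ w := by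
    rw [← hzw, Matrix.mulVec_mulVec, hSgdef, ← Matrix.mul_assoc,
      Matrix.nonsing_inv_mul _ hUA, Matrix.one_mul]
  have hQBz : qsum (A⁻¹ *ᵥ z) = ∑ i, w i * (Sg *ᵥ w) i := by
    rw [hBz]
    have h1 : qsum (Aᵀ *ᵥ w) = (Aᵀ *ᵥ w) ⬝ᵥ (Aᵀ *ᵥ w) := by
      simp only [qsum, dotProduct, sq]
    rw [h1]
    nth_rewrite 1 [Matrix.mulVec_transpose]
    rw [Matrix.dotProduct_mulVec, Matrix.vecMul_vecMul, ← hSgdef]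
    nth_rewrite 1 [← hsym]
    rw [Matrix.vecMul_transpose]
    simp only [dotProduct]
    exact Finset.sum_congr rfl fun i _ => mul_comm _ _
  have hqf := qf_bound Sg hd hop w
  have hab := abs_le.mp hqf
  have hnb := norm_bound Sg hd hop w
  rw [hzw] at hnb
  have hQw := qsum_nonneg w
  have h1d : (0:ℝ) < 1 + d := by linarith
  have h12d : (0:ℝ) < 1 - 2 * d := by linarith
  constructor
  · rw [hQBz, div_mul_eq_mul_div, div_le_iff₀ (by positivity)]
    nlinarith [hnb.2, hab.1]
  · rw [hQBz, div_mul_eq_mul_div, le_div_iff₀ h12d]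
    nlinarith [hnb.1, hab.2]





lemma lintegral_mulVec {n : ℕ} (B : Matrix (Fin n) (Fin n) ℝ) (hB : B.det ≠ 0)
    (f : (Fin n → ℝ) → ℝ≥0∞) (hf : Measurable f) :
    ∫⁻ z, f (B *ᵥ z) = ENNReal.ofReal |B.det|⁻¹ * ∫⁻ x, f x := by
  have hmeas : Measurable (Matrix.toLin' B) :=
    (LinearMap.continuous_on_pi _).measurable
  have h1 : (fun z => f (B *ᵥ z)) = fun z => f (Matrix.toLin' B z) := by
    funext z; rw [Matrix.toLin'_apply]
  rw [h1, ← MeasureTheory.lintegral_map hf hmeas,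
    Real.map_matrix_volume_pi_eq_smul_volume_pi hB, lintegral_smul_measure, abs_inv, smul_eq_mul]

lemma orthant_eq {n : ℕ} (S : Finset (Fin n)) :
    {z : Fin n → ℝ | (∀ i ∈ S, 0 < z i) ∧ ∀ i ∉ S, z i < 0} =
      Set.pi Set.univ (fun i => if i ∈ S then Ioi (0:ℝ) else Iio 0) := by
  ext z
  simp only [Set.mem_setOf_eq, Set.mem_pi, Set.mem_univ, forall_true_left]
  constructor
  · rintro ⟨h1, h2⟩ i
    by_cases hi : i ∈ S
    · simp [hi, h1 i hi]
    · simp [hi, h2 i hi]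
  · intro h
    constructor
    · intro i hi; have := h i; rw [if_pos hi] at this; exact this
    · intro i hi; have := h i; rw [if_neg hi] at this; exact this

lemma orthant_measurable {n : ℕ} (S : Finset (Fin n)) :
    MeasurableSet {z : Fin n → ℝ | (∀ i ∈ S, 0 < z i) ∧ ∀ i ∉ S, z i < 0} := by
  rw [orthant_eq]
  exact MeasurableSet.univ_pi fun i => by
    by_cases hi : i ∈ S <;> simp [hi, measurableSet_Ioi, measurableSet_Iio]

lemma lint_orthant {n : ℕ} {c : ℝ} (hc : 0 < c) (S : Finset (Fin n)) :
    ∫⁻ z : Fin n → ℝ in {z | (∀ i ∈ S, 0 < z i) ∧ ∀ i ∉ S, z i < 0},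
        ENNReal.ofReal (∏ i, gc c (z i)) = ENNReal.ofReal ((2⁻¹ * (√c)⁻¹) ^ n) := by
  rw [orthant_eq,
    lintegral_prod_box (fun _ => gc c) (fun _ => gc_measurable c) (fun _ => gc_nonneg c)
      (fun _ => gc_integrable hc) _
      (fun i => by by_cases hi : i ∈ S <;> simp [hi, measurableSet_Ioi, measurableSet_Iio])]
  have hfac : ∀ i : Fin n,
      (∫⁻ t in (if i ∈ S then Ioi (0:ℝ) else Iio 0), ENNReal.ofReal (gc c t)) =
        ENNReal.ofReal (2⁻¹ * (√c)⁻¹) := by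
    intro i
    by_cases hi : i ∈ S
    · rw [if_pos hi, ← ofReal_integral_eq_lintegral_ofReal
        ((gc_integrable hc).integrableOn) (Filter.Eventually.of_forall (gc_nonneg c)),
        integral_gc_Ioi hc]
    · rw [if_neg hi, ← ofReal_integral_eq_lintegral_ofReal
        ((gc_integrable hc).integrableOn) (Filter.Eventually.of_forall (gc_nonneg c)),
        integral_gc_Iio hc]
  rw [Finset.prod_congr rfl fun i _ => hfac i, Finset.prod_const, Finset.card_univ,
    Fintype.card_fin, ← ENNReal.ofReal_pow (by positivity)]




lemma sqrt_pow' {x : ℝ} (hx : 0 ≤ x) (n : ℕ) : √(x ^ n) = √x ^ n := by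
  have h : ((√x) ^ n) ^ 2 = x ^ n := by
    rw [← pow_mul, mul_comm, pow_mul, Real.sq_sqrt hx]
  rw [← h, Real.sqrt_sq (pow_nonneg (Real.sqrt_nonneg x) n)]

lemma per_lo {d : ℝ} (hd0 : 0 < d) (hd : d ≤ 1 / 100) :
    1 / 2 - 2 * d ≤ (√(1 + d))⁻¹ * (2⁻¹ * (√((1 + d) / (1 - 2 * d)))⁻¹) := by
  have h1d : (0:ℝ) < 1 + d := by linarith
  have h12d : (0:ℝ) < 1 - 2 * d := by linarith
  have hsq : √((1 + d) / (1 - 2 * d)) * √(1 + d) = (1 + d) / √(1 - 2 * d) := by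
    rw [← Real.sqrt_mul (by positivity)]
    have : (1 + d) / (1 - 2 * d) * (1 + d) = (1 + d) ^ 2 / (1 - 2 * d) := by ring
    rw [this, Real.sqrt_div (by positivity), Real.sqrt_sq (by linarith)]
  have hs12d : (0:ℝ) < √(1 - 2 * d) := Real.sqrt_pos.mpr h12d
  have hkey : 1 - 2 * d ≤ √(1 - 2 * d) := by
    have h2 : (1 - 2*d) ^ 2 ≤ 1 - 2*d := by nlinarith
    calc 1 - 2*d = √((1 - 2*d) ^ 2) := (Real.sqrt_sq (by linarith)).symm
      _ ≤ √(1 - 2*d) := Real.sqrt_le_sqrt h2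
  have hrw : (√(1 + d))⁻¹ * (2⁻¹ * (√((1 + d) / (1 - 2 * d)))⁻¹) =
      2⁻¹ * (√(1 - 2 * d) / (1 + d)) := by
    rw [mul_comm ((√(1 + d))⁻¹) _, mul_assoc, ← mul_inv, hsq]
    rw [inv_div]
  rw [hrw]
  have h2 : 2⁻¹ * (√(1 - 2 * d) / (1 + d)) = √(1 - 2 * d) / (2 * (1 + d)) := by
    field_simp
  rw [h2, le_div_iff₀ (by positivity)]
  nlinarith

lemma per_hi {d : ℝ} (hd0 : 0 < d) (hd : d ≤ 1 / 100) :
    (√(1 - d))⁻¹ * (2⁻¹ * (√((1 - d) / (1 + d) ^ 2))⁻¹) ≤ 1 / 2 + 2 * d := by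
  have h1d : (0:ℝ) < 1 + d := by linarith
  have h1md : (0:ℝ) < 1 - d := by linarith
  have hsq : √((1 - d) / (1 + d) ^ 2) * √(1 - d) = (1 - d) / (1 + d) := by
    rw [← Real.sqrt_mul (by positivity)]
    have : (1 - d) / (1 + d) ^ 2 * (1 - d) = ((1 - d) / (1 + d)) ^ 2 := by
      field_simp
    rw [this, Real.sqrt_sq (by positivity)]
  have hrw : (√(1 - d))⁻¹ * (2⁻¹ * (√((1 - d) / (1 + d) ^ 2))⁻¹) =
      2⁻¹ * ((1 + d) / (1 - d)) := by
    rw [mul_comm ((√(1 - d))⁻¹) _, mul_assoc, ← mul_inv, hsq, inv_div]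
  rw [hrw]
  have h2 : 2⁻¹ * ((1 + d) / (1 - d)) = (1 + d) / (2 * (1 - d)) := by
    field_simp
  rw [h2, div_le_iff₀ (by positivity)]
  nlinarith

lemma final_lo {d : ℝ} {n : ℕ} (hd0 : 0 < d) (hd : d ≤ 1 / 100) {DA : ℝ} (hDA0 : 0 < DA)
    (hub : DA ≤ √(1 + d) ^ n) :
    (1 / 2 - 2 * d) ^ n ≤ DA⁻¹ * (2⁻¹ * (√((1 + d) / (1 - 2 * d)))⁻¹) ^ n := by
  have hv0 : (0:ℝ) ≤ 2⁻¹ * (√((1 + d) / (1 - 2 * d)))⁻¹ := by positivity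
  have h1 : (1 / 2 - 2 * d) ^ n ≤ ((√(1 + d))⁻¹ * (2⁻¹ * (√((1 + d) / (1 - 2 * d)))⁻¹)) ^ n :=
    pow_le_pow_left₀ (by linarith) (per_lo hd0 hd) n
  have h2 : ((√(1 + d))⁻¹ * (2⁻¹ * (√((1 + d) / (1 - 2 * d)))⁻¹)) ^ n =
      (√(1 + d) ^ n)⁻¹ * (2⁻¹ * (√((1 + d) / (1 - 2 * d)))⁻¹) ^ n := by
    rw [mul_pow, inv_pow]
  have h3 : (√(1 + d) ^ n)⁻¹ ≤ DA⁻¹ := by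
    apply inv_anti₀ hDA0 hub
  calc (1 / 2 - 2 * d) ^ n ≤ _ := h1
    _ = _ := h2
    _ ≤ DA⁻¹ * (2⁻¹ * (√((1 + d) / (1 - 2 * d)))⁻¹) ^ n :=
        mul_le_mul_of_nonneg_right h3 (pow_nonneg hv0 n)

lemma final_hi {d : ℝ} {n : ℕ} (hd0 : 0 < d) (hd : d ≤ 1 / 100) {DA : ℝ} (hDA0 : 0 < DA)
    (hlb : √(1 - d) ^ n ≤ DA) :
    DA⁻¹ * (2⁻¹ * (√((1 - d) / (1 + d) ^ 2))⁻¹) ^ n ≤ (1 / 2 + 2 * d) ^ n := by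
  have hv0 : (0:ℝ) ≤ 2⁻¹ * (√((1 - d) / (1 + d) ^ 2))⁻¹ := by positivity
  have hs0 : (0:ℝ) < √(1 - d) ^ n := by
    apply pow_pos (Real.sqrt_pos.mpr (by linarith))
  have h3 : DA⁻¹ ≤ (√(1 - d) ^ n)⁻¹ := inv_anti₀ hs0 hlb
  calc DA⁻¹ * (2⁻¹ * (√((1 - d) / (1 + d) ^ 2))⁻¹) ^ n
      ≤ (√(1 - d) ^ n)⁻¹ * (2⁻¹ * (√((1 - d) / (1 + d) ^ 2))⁻¹) ^ n :=
        mul_le_mul_of_nonneg_right h3 (pow_nonneg hv0 n)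
    _ = ((√(1 - d))⁻¹ * (2⁻¹ * (√((1 - d) / (1 + d) ^ 2))⁻¹)) ^ n := by
        rw [← inv_pow, ← mul_pow]
    _ ≤ (1 / 2 + 2 * d) ^ n := by
        apply pow_le_pow_left₀ (by positivity) (per_hi hd0 hd) n




lemma main_est (C : ℝ) (hC : (100:ℝ) ≤ C) (n : ℕ) (hn : 1 ≤ n)
    (A : Matrix (Fin n) (Fin n) ℝ)
    (hdiag : ∀ i, (A * A.transpose) i i = 1)
    (hoff : ∀ i j, i ≠ j → |(A * A.transpose) i j| ≤ 1 / (C * (n : ℝ) ^ 2))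
    (S : Finset (Fin n)) :
    ENNReal.ofReal ((1 / 2 - 2 / (C * n)) ^ n) ≤
      (Measure.map A.mulVec (Measure.pi fun _ : Fin n => gaussianReal 0 1))
        {z : Fin n → ℝ | (∀ i ∈ S, 0 < z i) ∧ ∀ i ∉ S, z i < 0} ∧
    (Measure.map A.mulVec (Measure.pi fun _ : Fin n => gaussianReal 0 1))
        {z : Fin n → ℝ | (∀ i ∈ S, 0 < z i) ∧ ∀ i ∉ S, z i < 0} ≤
      ENNReal.ofReal ((1 / 2 + 2 / (C * n)) ^ n) := by
  have hC0 : (0:ℝ) < C := by linarith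
  have hn1 : (1:ℝ) ≤ (n:ℝ) := by exact_mod_cast hn
  have hn0 : (0:ℝ) < (n:ℝ) := by linarith
  set d : ℝ := 1 / (C * n) with hd_def
  have hd0 : 0 < d := by positivity
  have hd100 : d ≤ 1 / 100 := by
    rw [hd_def]
    apply one_div_le_one_div_of_le (by norm_num)
    nlinarith
  have hd2 : 2 * d < 1 := by linarith
  set Sg := A * Aᵀ with hSg_def
  -- entries of Sg - 1
  have h_entry : ∀ i j, |(Sg - 1) i j| ≤ 1 / (C * (n : ℝ) ^ 2) := by
    intro i j
    by_cases hij : i = j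
    · subst hij
      simp only [Matrix.sub_apply, Matrix.one_apply_eq, hdiag i, sub_self, abs_zero]
      exact le_of_lt (one_div_pos.mpr (mul_pos hC0 (by positivity)))
    · simp only [Matrix.sub_apply, Matrix.one_apply_ne hij, sub_zero]
      exact hoff i j hij
  -- operator bound
  have hop : ∀ v, qsum ((Sg - 1) *ᵥ v) ≤ d ^ 2 * qsum v := by
    intro v
    have h1 := op_bound (Sg - 1)
      (le_of_lt (one_div_pos.mpr (mul_pos hC0 (by positivity))) : (0:ℝ) ≤ 1 / (C * (n:ℝ) ^ 2))
      h_entry v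
    have h2 : (1 / (C * (n:ℝ) ^ 2)) ^ 2 * (n : ℝ) ^ 2 = d ^ 2 := by
      rw [hd_def]; field_simp
    rwa [h2] at h1
  -- hermitian
  have hherm : Sg.IsHermitian := by
    rw [Matrix.IsHermitian, Matrix.conjTranspose_eq_transpose_of_trivial, hSg_def,
      Matrix.transpose_mul, Matrix.transpose_transpose]
  -- determinant bounds
  have hdetb := det_bound hherm hd0.le (by linarith) hop
  have hdet_pos : 0 < Sg.det := lt_of_lt_of_le (pow_pos (by linarith : (0:ℝ) < 1 - d) n) hdetb.1
  have hdetA2 : Sg.det = A.det ^ 2 := by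
    rw [hSg_def, Matrix.det_mul, Matrix.det_transpose, sq]
  have hdetA_ne : A.det ≠ 0 := by
    intro h
    rw [hdetA2, h] at hdet_pos
    simp at hdet_pos
  have hUA : IsUnit A.det := isUnit_iff_ne_zero.2 hdetA_ne
  have hUS : IsUnit Sg.det := isUnit_iff_ne_zero.2 (ne_of_gt hdet_pos)
  have habsA : |A.det| = √Sg.det := by rw [hdetA2, Real.sqrt_sq_eq_abs]
  have habsA_pos : 0 < |A.det| := abs_pos.2 hdetA_ne
  have habsA_ub : |A.det| ≤ √(1 + d) ^ n := by
    rw [habsA, ← sqrt_pow' (by linarith)]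
    exact Real.sqrt_le_sqrt hdetb.2
  have habsA_lb : √(1 - d) ^ n ≤ |A.det| := by
    rw [habsA, ← sqrt_pow' (by linarith)]
    exact Real.sqrt_le_sqrt hdetb.1
  -- quadratic bounds for the inverse
  have hquad := inv_quad_bound A hd0.le hd2 hUA hUS (by rw [← hSg_def]; exact hop)
  -- the orthant set
  set E : Set (Fin n → ℝ) := {z | (∀ i ∈ S, 0 < z i) ∧ ∀ i ∉ S, z i < 0} with hE_def
  have hEmeas : MeasurableSet E := orthant_measurable S
  have hmulmeas : Measurable A.mulVec := by
    have : A.mulVec = ⇑(Matrix.toLin' A) := by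
      funext v; rw [Matrix.toLin'_apply]
    rw [this]
    exact (LinearMap.continuous_on_pi _).measurable
  -- express the measure via a density
  set P : ℝ≥0∞ :=
    (Measure.map A.mulVec (Measure.pi fun _ : Fin n => gaussianReal 0 1)) E with hP_def
  have hP1 : P = ∫⁻ x in A.mulVec ⁻¹' E, ENNReal.ofReal (∏ i, gc 1 (x i)) := by
    rw [hP_def, Measure.map_apply hmulmeas hEmeas, pi_gauss_eq,
      withDensity_apply _ (hmulmeas hEmeas)]
    simp_rw [gaussianPDFReal_eq_gc]
  set F : (Fin n → ℝ) → ℝ≥0∞ :=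
      (A.mulVec ⁻¹' E).indicator (fun x => ENNReal.ofReal (∏ i, gc 1 (x i))) with hF_def
  have hFmeas : Measurable F := by
    apply Measurable.indicator _ (hmulmeas hEmeas)
    apply Measurable.ennreal_ofReal
    exact Finset.measurable_prod _ fun i _ => (gc_measurable 1).comp (measurable_pi_apply i)
  have hP2 : P = ∫⁻ x, F x := by
    rw [hP1, hF_def, lintegral_indicator (hmulmeas hEmeas)]
  -- change of variables
  have hdetBinv : (A⁻¹).det ≠ 0 := by
    rw [Matrix.det_nonsing_inv, Ring.inverse_eq_inv']
    exact inv_ne_zero hdetA_ne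
  have hCoV : ∫⁻ z, F (A⁻¹ *ᵥ z) = ENNReal.ofReal |A.det| * ∫⁻ x, F x := by
    rw [lintegral_mulVec _ hdetBinv F hFmeas]
    congr 1
    rw [Matrix.det_nonsing_inv, Ring.inverse_eq_inv', abs_inv, inv_inv]
  have hPX : P = ENNReal.ofReal |A.det|⁻¹ * ∫⁻ z, F (A⁻¹ *ᵥ z) := by
    rw [hCoV, ← mul_assoc, ← ENNReal.ofReal_mul (by positivity),
      inv_mul_cancel₀ (ne_of_gt habsA_pos), ENNReal.ofReal_one, one_mul, hP2]
  -- identify F ∘ A⁻¹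
  have hAAinv : ∀ z : Fin n → ℝ, A *ᵥ (A⁻¹ *ᵥ z) = z := by
    intro z
    rw [Matrix.mulVec_mulVec, Matrix.mul_nonsing_inv _ hUA, Matrix.one_mulVec]
  have hFB : ∀ z, F (A⁻¹ *ᵥ z) =
      E.indicator (fun z => ENNReal.ofReal (∏ i, gc 1 ((A⁻¹ *ᵥ z) i))) z := by
    intro z
    rw [hF_def]
    by_cases hz : z ∈ E
    · rw [Set.indicator_of_mem hz]
      have hmem : A⁻¹ *ᵥ z ∈ A.mulVec ⁻¹' E := by
        simp only [Set.mem_preimage, hAAinv z]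
        exact hz
      rw [Set.indicator_of_mem hmem]
    · have hmem : A⁻¹ *ᵥ z ∉ A.mulVec ⁻¹' E := by
        simp only [Set.mem_preimage, hAAinv z]
        exact hz
      rw [Set.indicator_of_notMem hmem, Set.indicator_of_notMem hz]
  -- pointwise sandwich
  set a : ℝ := (1 - d) / (1 + d) ^ 2 with ha_def
  set b : ℝ := (1 + d) / (1 - 2 * d) with hb_def
  have ha0 : 0 < a := by
    rw [ha_def]
    exact div_pos (by linarith) (pow_pos (by linarith) 2)
  have hb0 : 0 < b := by
    rw [hb_def]
    apply div_pos (by linarith) (by linarith)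
  have hlo_pt : ∀ z : Fin n → ℝ, ENNReal.ofReal (∏ i, gc b (z i)) ≤
      ENNReal.ofReal (∏ i, gc 1 ((A⁻¹ *ᵥ z) i)) := by
    intro z
    apply ENNReal.ofReal_le_ofReal
    rw [prod_gc, prod_gc]
    apply mul_le_mul_of_nonneg_left _ (pow_nonneg (inv_nonneg.2 (Real.sqrt_nonneg _)) n)
    apply Real.exp_le_exp.2
    have h1 : qsum (A⁻¹ *ᵥ z) ≤ b * qsum z := (hquad z).2
    have h2 : ∑ i, z i ^ 2 = qsum z := rfl
    have h3 : ∑ i, (A⁻¹ *ᵥ z) i ^ 2 = qsum (A⁻¹ *ᵥ z) := rfl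
    rw [h2, h3]
    nlinarith [qsum_nonneg z]
  have hhi_pt : ∀ z : Fin n → ℝ, ENNReal.ofReal (∏ i, gc 1 ((A⁻¹ *ᵥ z) i)) ≤
      ENNReal.ofReal (∏ i, gc a (z i)) := by
    intro z
    apply ENNReal.ofReal_le_ofReal
    rw [prod_gc, prod_gc]
    apply mul_le_mul_of_nonneg_left _ (pow_nonneg (inv_nonneg.2 (Real.sqrt_nonneg _)) n)
    apply Real.exp_le_exp.2
    have h1 : a * qsum z ≤ qsum (A⁻¹ *ᵥ z) := (hquad z).1
    have h2 : ∑ i, z i ^ 2 = qsum z := rfl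
    have h3 : ∑ i, (A⁻¹ *ᵥ z) i ^ 2 = qsum (A⁻¹ *ᵥ z) := rfl
    rw [h2, h3]
    nlinarith [qsum_nonneg z]
  -- integral sandwich
  have hlow : ENNReal.ofReal ((2⁻¹ * (√b)⁻¹) ^ n) ≤ ∫⁻ z, F (A⁻¹ *ᵥ z) := by
    rw [← lint_orthant hb0 S, ← lintegral_indicator hEmeas]
    apply lintegral_mono
    intro z
    show E.indicator _ z ≤ F (A⁻¹ *ᵥ z)
    rw [hFB z]
    exact Set.indicator_le_indicator (hlo_pt z)
  have hhigh : ∫⁻ z, F (A⁻¹ *ᵥ z) ≤ ENNReal.ofReal ((2⁻¹ * (√a)⁻¹) ^ n) := by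
    rw [← lint_orthant ha0 S, ← lintegral_indicator hEmeas]
    apply lintegral_mono
    intro z
    show F (A⁻¹ *ᵥ z) ≤ E.indicator _ z
    rw [hFB z]
    exact Set.indicator_le_indicator (hhi_pt z)
  -- combine
  have hγlo : (1:ℝ) / 2 - 2 / (C * n) = 1 / 2 - 2 * d := by rw [hd_def]; ring
  have hγhi : (1:ℝ) / 2 + 2 / (C * n) = 1 / 2 + 2 * d := by rw [hd_def]; ring
  constructor
  · rw [hγlo, hPX]
    calc ENNReal.ofReal ((1 / 2 - 2 * d) ^ n)
        ≤ ENNReal.ofReal (|A.det|⁻¹ * (2⁻¹ * (√b)⁻¹) ^ n) :=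
          ENNReal.ofReal_le_ofReal (by rw [hb_def]; exact final_lo hd0 hd100 habsA_pos habsA_ub)
      _ = ENNReal.ofReal |A.det|⁻¹ * ENNReal.ofReal ((2⁻¹ * (√b)⁻¹) ^ n) :=
          ENNReal.ofReal_mul (by positivity)
      _ ≤ ENNReal.ofReal |A.det|⁻¹ * ∫⁻ z, F (A⁻¹ *ᵥ z) :=
          mul_le_mul_right hlow _
  · rw [hγhi, hPX]
    calc ENNReal.ofReal |A.det|⁻¹ * ∫⁻ z, F (A⁻¹ *ᵥ z)
        ≤ ENNReal.ofReal |A.det|⁻¹ * ENNReal.ofReal ((2⁻¹ * (√a)⁻¹) ^ n) :=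
          mul_le_mul_right hhigh _
      _ = ENNReal.ofReal (|A.det|⁻¹ * (2⁻¹ * (√a)⁻¹) ^ n) :=
          (ENNReal.ofReal_mul (by positivity)).symm
      _ ≤ ENNReal.ofReal ((1 / 2 + 2 * d) ^ n) :=
          ENNReal.ofReal_le_ofReal (by rw [ha_def]; exact final_hi hd0 hd100 habsA_pos habsA_lb)


end AuxGaussOrthant

/-- Lemma 4.19, orthant probabilities of a weakly correlated
Gaussian vector: if `Z = A ξ` with `ξ` standard Gaussian, so that `Z ∼ N(0, Σ)`
with `Σ = A Aᵀ` satisfying `Σ_{ii} = 1` and `|Σ_{ij}| ≤ 1/(C n²)` for `i ≠ j`,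
then every orthant has probability between `γ₁ⁿ` and `γ₂ⁿ`, where
`γ₁ = 1/2 − 2/(Cn)` and `γ₂ = 1/2 + 2/(Cn)`. -/
theorem gaussian_orthant_probability :
    ∃ (C₀ : ℝ) (N₀ : ℕ),
      ∀ C : ℝ, C₀ ≤ C →
      ∀ n : ℕ, N₀ ≤ n →
      ∀ A : Matrix (Fin n) (Fin n) ℝ,
        (∀ i, (A * A.transpose) i i = 1) →
        (∀ i j, i ≠ j → |(A * A.transpose) i j| ≤ 1 / (C * (n : ℝ) ^ 2)) →
        ∀ S : Finset (Fin n),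
          ENNReal.ofReal ((1 / 2 - 2 / (C * n)) ^ n) ≤
            (Measure.map A.mulVec (Measure.pi fun _ : Fin n => gaussianReal 0 1))
              {z : Fin n → ℝ | (∀ i ∈ S, 0 < z i) ∧ ∀ i ∉ S, z i < 0} ∧
          (Measure.map A.mulVec (Measure.pi fun _ : Fin n => gaussianReal 0 1))
              {z : Fin n → ℝ | (∀ i ∈ S, 0 < z i) ∧ ∀ i ∉ S, z i < 0} ≤
            ENNReal.ofReal ((1 / 2 + 2 / (C * n)) ^ n) := by
  exact ⟨100, 1, fun C hC n hn A hdiag hoff S => main_est C hC n hn A hdiag hoff S⟩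

end XOR
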